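/- If y* ∈ ℂⁿ satisfies f_iʰ(y*) = 1 for all i = 1,…,k, then there exists an extreme point (vertex) v of P such that y*_j ≠ 0 for every index j with ⟨u_j, v⟩ + a_j > 0, where a = a₁ + ⋯ + a_k ∈ ℤⁿ. (In the language of the Cox construction this says that the affine variety cut out by f₁ʰ − 1, …, f_kʰ − 1 does not meet the base locus Z(Σ_P); in particular the positive chart Y does not intersect Z(Σ_P).) -/

import Mathlib

/-!
Statement 2: if `y* ∈ ℂⁿ` satisfies `f_iʰ(y*) = 1` for all `i`, then there is an extreme
point (vertex) `v` of `P` such that `y*_j ≠ 0` for every index `j` with `⟨u_j, v⟩ + a_j > 0`,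
where `a = a₁ + ⋯ + a_k`.
-/

noncomputable section

open Finset Matrix

/-- Evaluation at `y ∈ ℂⁿ` of the homogenization
`fʰ(y) = Σ_{m ∈ S} c m ∏ⱼ yⱼ ^ (⟨uⱼ, m⟩ + aⱼ)` of the Laurent polynomial with support `S`
and coefficients `c`, with respect to the facet normals `u` and offsets `a`. -/
def homogEval {d n : ℕ} (S : Finset (Fin d → ℤ)) (c : (Fin d → ℤ) → ℂ)
    (u : Fin n → Fin d → ℤ) (a : Fin n → ℤ) (y : Fin n → ℂ) : ℂ :=
  ∑ m ∈ S, c m * ∏ j, y j ^ ((∑ l, u j l * m l) + a j).toNat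

/-- The real polyhedron `{m ∈ ℝᵈ : ⟨u_j, m⟩ + A_j ≥ 0 for all j}`. -/
def polyhedron {d n : ℕ} (u : Fin n → Fin d → ℤ) (A : Fin n → ℤ) : Set (Fin d → ℝ) :=
  {m | ∀ j, 0 ≤ (∑ l, (u j l : ℝ) * m l) + (A j : ℝ)}

/-- The real points of an integer lattice vector. -/
def toReal {d : ℕ} (m : Fin d → ℤ) : Fin d → ℝ := fun l => (m l : ℝ)

/-- The Minkowski sum `P₁ + ⋯ + P_k` of the Newton polytopes `P_i = conv(S_i)`. -/
def minkowskiSum {d k : ℕ} (S : Fin k → Finset (Fin d → ℤ)) : Set (Fin d → ℝ) :=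
  {x | ∃ g : Fin k → Fin d → ℝ,
        (∀ i, g i ∈ convexHull ℝ (toReal '' (S i : Set (Fin d → ℤ)))) ∧ x = ∑ i, g i}

-- affine linearity helper
lemma lin_comb {d : ℕ} (w : Fin d → ℤ) (A0 : ℤ) (x₁ x₂ : Fin d → ℝ) (p q : ℝ)
    (hpq : p + q = 1) :
    (∑ l, (w l : ℝ) * (p • x₁ + q • x₂) l) + (A0 : ℝ)
      = p * ((∑ l, (w l : ℝ) * x₁ l) + A0) + q * ((∑ l, (w l : ℝ) * x₂ l) + A0) := by
  have h : (∑ l, (w l : ℝ) * (p • x₁ + q • x₂) l)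
      = p * (∑ l, (w l : ℝ) * x₁ l) + q * (∑ l, (w l : ℝ) * x₂ l) := by
    simp only [Pi.add_apply, Pi.smul_apply, smul_eq_mul, Finset.mul_sum,
      ← Finset.sum_add_distrib]
    exact Finset.sum_congr rfl fun l _ => by ring
  rw [h]
  have hA0 : (A0 : ℝ) = p * A0 + q * A0 := by rw [← add_mul, hpq, one_mul]
  linarith

theorem statement2
    (d k : ℕ) (hd : 1 ≤ d) (hk : 1 ≤ k)
    -- the Laurent polynomials `f i` with nonempty support `S i` and nonzero coefficients
    (S : Fin k → Finset (Fin d → ℤ)) (hS : ∀ i, (S i).Nonempty)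
    (c : Fin k → (Fin d → ℤ) → ℂ) (hc : ∀ i, ∀ m ∈ S i, c i m ≠ 0)
    -- the columns `u j` of `F` and the vectors `a i` with `a i j = -min_{m ∈ S i} ⟨u j, m⟩`
    (u : Fin (d + k) → Fin d → ℤ)
    (a : Fin k → Fin (d + k) → ℤ)
    (ha_le : ∀ i j, ∀ m ∈ S i, 0 ≤ (∑ l, u j l * m l) + a i j)
    (ha_min : ∀ i j, ∃ m ∈ S i, (∑ l, u j l * m l) + a i j = 0)
    -- the unimodular matrix `M` whose first `d` rows are `F` and last `k` rows are the `a i`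
    (M : Matrix (Fin (d + k)) (Fin (d + k)) ℤ)
    (hMF : ∀ (i : Fin d) (j : Fin (d + k)), M (Fin.castAdd k i) j = u j i)
    (hMA : ∀ (i : Fin k) (j : Fin (d + k)), M (Fin.natAdd d i) j = a i j)
    (hMdet : M.det = 1 ∨ M.det = -1)
    -- the total offset vector `a = a₁ + ⋯ + a_k`
    (A : Fin (d + k) → ℤ) (hA : ∀ j, A j = ∑ i, a i j)
    -- Assumption 3.1: the Minkowski sum `P = P₁ + ⋯ + P_k` equals the polyhedron
    -- `{m : Fᵗm + a ≥ 0}` …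
    (hP : minkowskiSum S = polyhedron u A)
    -- … `P` is `d`-dimensional …
    (hPdim : affineSpan ℝ (polyhedron u A) = ⊤)
    -- … the `u_j` are primitive …
    (hprim : ∀ j, Finset.univ.gcd (u j) = 1)
    -- … and each of the `n = d + k` inequalities defines a facet of `P`
    (hfacet : ∀ j, ∃ x ∈ polyhedron u A,
        (∑ l, (u j l : ℝ) * x l) + (A j : ℝ) = 0 ∧
        ∀ j', j' ≠ j → 0 < (∑ l, (u j' l : ℝ) * x l) + (A j' : ℝ)) :
    -- conclusion: the variety `{f₁ʰ = ⋯ = f_kʰ = 1}` avoids the base locus `Z(Σ_P)`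
    ∀ y : Fin (d + k) → ℂ,
      (∀ i, homogEval (S i) (c i) u (a i) y = 1) →
      ∃ v ∈ Set.extremePoints ℝ (polyhedron u A),
        ∀ j, 0 < (∑ l, (u j l : ℝ) * v l) + (A j : ℝ) → y j ≠ 0 := by
  intro y hy
  -- Step 1: for each i pick a monomial whose exponents vanish at zero coordinates of y
  have key : ∀ i : Fin k, ∃ m ∈ S i, ∀ j, y j = 0 → (∑ l, u j l * m l) + a i j = 0 := by
    intro i
    by_contra h
    push_neg at h
    have h0 : homogEval (S i) (c i) u (a i) y = 0 := by
      unfold homogEval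
      apply Finset.sum_eq_zero
      intro m hm
      obtain ⟨j, hj0, hjne⟩ := h m hm
      have hpos : 0 < ((∑ l, u j l * m l) + a i j).toNat := by
        have := ha_le i j m hm; omega
      have : (∏ j', y j' ^ ((∑ l, u j' l * m l) + a i j').toNat) = 0 :=
        Finset.prod_eq_zero (Finset.mem_univ j)
          (by rw [hj0]; exact zero_pow (by omega))
      rw [this, mul_zero]
    rw [hy i] at h0
    exact one_ne_zero h0
  choose mf hmfS hmf0 using key
  -- the sum of chosen monomials
  set m0 : Fin d → ℤ := ∑ i, mf i with hm0
  set v0 : Fin d → ℝ := toReal m0 with hv0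
  have hv0sum : v0 = ∑ i, toReal (mf i) := by
    funext l
    simp [hv0, toReal, hm0, Finset.sum_apply]
  have hv0P : v0 ∈ polyhedron u A := by
    rw [← hP]
    exact ⟨fun i => toReal (mf i),
      fun i => subset_convexHull ℝ _ ⟨mf i, Finset.mem_coe.2 (hmfS i), rfl⟩, hv0sum⟩
  -- value of the linear functionals at v0
  have hv0val : ∀ j, (∑ l, (u j l : ℝ) * v0 l) + (A j : ℝ)
      = ∑ i, (((∑ l, u j l * mf i l) + a i j : ℤ) : ℝ) := by
    intro j
    have : (∑ l, (u j l : ℝ) * v0 l) = ∑ i, ((∑ l, u j l * mf i l : ℤ) : ℝ) := by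
      rw [hv0sum]
      push_cast
      rw [Finset.sum_comm]
      apply Finset.sum_congr rfl
      intro l _
      simp [toReal, Finset.sum_apply, Finset.mul_sum]
    rw [this, hA j]
    push_cast
    rw [← Finset.sum_add_distrib]
  have hv0zero : ∀ j, y j = 0 → (∑ l, (u j l : ℝ) * v0 l) + (A j : ℝ) = 0 := by
    intro j hj
    rw [hv0val j]
    apply Finset.sum_eq_zero
    intro i _
    rw [hmf0 i j hj]
    norm_num
  -- the face Q
  set Q : Set (Fin d → ℝ) :=
    {x ∈ polyhedron u A | ∀ j, y j = 0 → (∑ l, (u j l : ℝ) * x l) + (A j : ℝ) = 0} with hQ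
  have hQne : Q.Nonempty := ⟨v0, hv0P, hv0zero⟩
  -- P compact
  have hPcomp : IsCompact (polyhedron u A) := by
    rw [← hP]
    have heq : minkowskiSum S = (fun g : Fin k → Fin d → ℝ => ∑ i, g i) ''
        (Set.univ.pi fun i => convexHull ℝ (toReal '' ((S i : Set (Fin d → ℤ))))) := by
      ext x
      constructor
      · rintro ⟨g, hg, rfl⟩
        exact ⟨g, fun i _ => hg i, rfl⟩
      · rintro ⟨g, hg, rfl⟩
        exact ⟨g, fun i => hg i (Set.mem_univ i), rfl⟩
    rw [heq]
    exact (isCompact_univ_pi fun i =>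
      (((S i).finite_toSet.image toReal).isCompact_convexHull (𝕜 := ℝ))).image
      (continuous_finset_sum _ fun i _ => continuous_apply i)
  -- Q compact
  have hQcomp : IsCompact Q := by
    apply hPcomp.of_isClosed_subset
    · have : Q = (polyhedron u A) ∩
          ⋂ j ∈ {j | y j = 0}, {x : Fin d → ℝ | (∑ l, (u j l : ℝ) * x l) + (A j : ℝ) = 0} := by
        ext x
        simp only [hQ, Set.mem_setOf_eq, Set.mem_inter_iff, Set.mem_iInter]
      rw [this]
      apply IsClosed.inter
      · have : polyhedron u A = ⋂ j, {x : Fin d → ℝ | 0 ≤ (∑ l, (u j l : ℝ) * x l) + (A j : ℝ)} := by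
          ext x; simp [polyhedron]
        rw [this]
        exact isClosed_iInter fun j => isClosed_le continuous_const (by fun_prop)
      · exact isClosed_biInter fun j _ => isClosed_eq (by fun_prop) continuous_const
    · intro x hx; exact hx.1
  -- Q has an extreme point
  obtain ⟨v, hvQ⟩ := hQcomp.extremePoints_nonempty hQne
  obtain ⟨hvQmem, hvext⟩ := mem_extremePoints.1 hvQ
  refine ⟨v, ?_, ?_⟩
  · -- v is an extreme point of P
    rw [mem_extremePoints]
    refine ⟨hvQmem.1, ?_⟩
    intro x₁ hx₁ x₂ hx₂ hseg
    obtain ⟨p, q, hp, hq, hpq, hv⟩ := hseg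
    -- both endpoints lie in Q
    have hface : ∀ x', x' = x₁ ∨ x' = x₂ → x' ∈ polyhedron u A → x' ∈ Q := by
      intro x' hx' hx'P
      refine ⟨hx'P, fun j hj => ?_⟩
      have h1 : 0 ≤ (∑ l, (u j l : ℝ) * x₁ l) + (A j : ℝ) := hx₁ j
      have h2 : 0 ≤ (∑ l, (u j l : ℝ) * x₂ l) + (A j : ℝ) := hx₂ j
      have hz : (∑ l, (u j l : ℝ) * v l) + (A j : ℝ) = 0 := hvQmem.2 j hj
      rw [← hv, lin_comb (u j) (A j) x₁ x₂ p q hpq] at hz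
      rcases hx' with rfl | rfl
      · nlinarith
      · nlinarith
    exact hvext x₁ (hface x₁ (Or.inl rfl) hx₁) x₂ (hface x₂ (Or.inr rfl) hx₂)
      ⟨p, q, hp, hq, hpq, hv⟩
  · intro j hjpos hj0
    rw [hvQmem.2 j hj0] at hjpos
    exact lt_irrefl _ hjpos

end
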